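/- arXiv:1109.0901 — 4 statements merged into one kernel-verified Lean document; each statement's English description precedes it below -/
import Mathlib

section
/- Let L be a finite field extension of ℚ and let n be a natural number. Then there exists y ∈ L such that for every k with 1 ≤ k ≤ n, the element y^k is a primitive element, i.e. ℚ(y^k) = L. -/
open IntermediateField Polynomial Finset

/-- For a proper intermediate field `F`, a primitive element `x`, and `N ≥ 1`, only finitely
many rational `t` satisfy `(x + t)^N ∈ F`. -/
lemma aux_bad_set_finite (L : Type*) [Field L] [Algebra ℚ L] [FiniteDimensional ℚ L]
    (N : ℕ) (hN : 1 ≤ N) (x : L) (hx : IntermediateField.adjoin ℚ {x} = ⊤)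
    (F : IntermediateField ℚ L) (hF : F ≠ ⊤) :
    {t : ℚ | (x + algebraMap ℚ L t) ^ N ∈ F}.Finite := by
  haveI : CharZero L := charZero_of_injective_algebraMap (algebraMap ℚ L).injective
  by_contra hinf
  replace hinf : Set.Infinite {t : ℚ | (x + algebraMap ℚ L t) ^ N ∈ F} := hinf
  set M : Submodule ℚ L := Subalgebra.toSubmodule F.toSubalgebra with hM
  have hmemM : ∀ z : L, z ∈ M ↔ z ∈ F := fun z => Iff.rfl
  set p : L[X] := (X + C x) ^ N with hp
  set a : ℕ → L ⧸ M := fun i => M.mkQ (p.coeff i) with ha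
  -- the polynomial function vanishes on the infinite bad set
  have h1 : ∀ t ∈ {t : ℚ | (x + algebraMap ℚ L t) ^ N ∈ F},
      ∑ i ∈ range (N + 1), t ^ i • a i = 0 := by
    intro t ht
    have hdeg : p.natDegree < N + 1 := by
      have : p.natDegree ≤ N * 1 := by
        rw [hp]
        exact (natDegree_pow _ _).le.trans (by
          simpa using Nat.mul_le_mul_left N (natDegree_X_add_C x).le)
      omega
    have heval : p.eval (algebraMap ℚ L t) = (x + algebraMap ℚ L t) ^ N := by
      simp [hp, add_comm]
    have hsum : p.eval (algebraMap ℚ L t)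
        = ∑ i ∈ range (N + 1), t ^ i • p.coeff i := by
      rw [eval_eq_sum_range' hdeg]
      refine Finset.sum_congr rfl fun i _ => ?_
      rw [Algebra.smul_def, map_pow, mul_comm]
    have hz : M.mkQ (p.eval (algebraMap ℚ L t)) = 0 := by
      rw [Submodule.mkQ_apply, Submodule.Quotient.mk_eq_zero, heval]
      exact ht
    rw [hsum, map_sum] at hz
    simpa only [map_smul] using hz
  -- hence all (quotient) coefficients vanish
  have h2 : ∀ i ∈ range (N + 1), a i = 0 := by
    intro i hi
    rw [← Module.forall_dual_apply_eq_zero_iff (R := ℚ)]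
    intro φ
    set P : ℚ[X] := ∑ j ∈ range (N + 1), C (φ (a j)) * X ^ j with hP
    have hroots : P = 0 := by
      apply eq_zero_of_infinite_isRoot
      apply hinf.mono
      intro t ht
      have := h1 t ht
      have : φ (∑ j ∈ range (N + 1), t ^ j • a j) = 0 := by rw [this, map_zero]
      rw [map_sum] at this
      simp only [map_smul, smul_eq_mul] at this
      show P.IsRoot t
      rw [hP, IsRoot, eval_finset_sum]
      simp only [eval_mul, eval_C, eval_pow, eval_X]
      rw [← this]
      exact Finset.sum_congr rfl fun j _ => mul_comm _ _
    have : P.coeff i = φ (a i) := by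
      rw [hP, finset_sum_coeff]
      simp only [coeff_C_mul_X_pow]
      rw [Finset.sum_ite_eq (range (N + 1)) i (fun j => φ (a j))]
      simp [hi]
    rw [← this, hroots, coeff_zero]
  -- in particular the coefficient of `X^(N-1)`, which is `N • x` up to units, lies in `F`
  have hNm : N - 1 ∈ range (N + 1) := by simp
  have hcoeff : p.coeff (N - 1) ∈ F := by
    have := h2 (N - 1) hNm
    rw [ha] at this
    exact (hmemM _).mp (by simpa [Submodule.Quotient.mk_eq_zero] using this)
  have hcv : p.coeff (N - 1) = x * (N : L) := by
    rw [hp, coeff_X_add_C_pow, Nat.sub_sub_self hN, pow_one]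
    congr 1
    rw [Nat.choose_symm hN, Nat.choose_one_right]
  rw [hcv] at hcoeff
  -- hence `x ∈ F`, contradicting properness of `F`
  have hxF : x ∈ F := by
    have h01 : ((N : ℚ))⁻¹ • (x * (N : L)) ∈ F := F.toSubalgebra.smul_mem hcoeff _
    have : ((N : ℚ))⁻¹ • (x * (N : L)) = x := by
      have hNL : (N : L) ≠ 0 := Nat.cast_ne_zero.mpr (by omega)
      rw [Algebra.smul_def, map_inv₀, map_natCast, mul_comm, mul_assoc,
        mul_inv_cancel₀ hNL, mul_one]
    rwa [this] at h01
  apply hF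
  rw [← top_le_iff, ← hx]
  exact adjoin_le_iff.mpr (Set.singleton_subset_iff.mpr hxF)

/-- There exists `y` with `y^N` primitive, for any fixed `N ≥ 1`. -/
lemma aux_exists_pow_primitive (L : Type*) [Field L] [Algebra ℚ L]
    [FiniteDimensional ℚ L] (N : ℕ) (hN : 1 ≤ N) :
    ∃ y : L, IntermediateField.adjoin ℚ {y ^ N} = ⊤ := by
  have halg : Algebra.IsAlgebraic ℚ L := Algebra.IsAlgebraic.of_finite ℚ L
  have hfin : Finite (IntermediateField ℚ L) :=
    Field.finite_intermediateField_of_exists_primitive_element ℚ L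
      (Field.exists_primitive_element ℚ L)
  obtain ⟨x, hx⟩ := Field.exists_primitive_element ℚ L
  have hxtop : IntermediateField.adjoin ℚ {x} = ⊤ := hx
  -- union of bad sets over the (finitely many) proper intermediate fields
  set Bad : Set ℚ := ⋃ F ∈ {F : IntermediateField ℚ L | F ≠ ⊤},
    {t : ℚ | (x + algebraMap ℚ L t) ^ N ∈ F} with hBad
  have hBadfin : Bad.Finite := by
    apply Set.Finite.biUnion (Set.toFinite _)
    intro F hFne
    exact aux_bad_set_finite L N hN x hxtop F hFne
  obtain ⟨t, ht⟩ := (hBadfin.infinite_compl).nonempty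
  refine ⟨x + algebraMap ℚ L t, ?_⟩
  by_contra htop
  apply ht
  rw [hBad]
  refine Set.mem_biUnion htop ?_
  exact mem_adjoin_simple_self ℚ _

/-- For a finite extension `L` of `ℚ` and any `n`, there exists `y ∈ L` such that
`y, y², …, yⁿ` are all primitive elements, i.e. `ℚ(yᵏ) = L` for `1 ≤ k ≤ n`. -/
theorem exists_power_primitive_element (L : Type*) [Field L] [Algebra ℚ L]
    [FiniteDimensional ℚ L] (n : ℕ) :
    ∃ y : L, ∀ k : ℕ, 1 ≤ k → k ≤ n → IntermediateField.adjoin ℚ {y ^ k} = ⊤ := by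
  obtain ⟨y, hy⟩ := aux_exists_pow_primitive L n.factorial n.factorial_pos
  refine ⟨y, fun k hk1 hkn => ?_⟩
  have hdvd : k ∣ n.factorial := Nat.dvd_factorial hk1 hkn
  have hpow : y ^ n.factorial ∈ IntermediateField.adjoin ℚ {y ^ k} := by
    rw [← Nat.div_mul_cancel hdvd, mul_comm, pow_mul]
    exact pow_mem (mem_adjoin_simple_self ℚ (y ^ k)) _
  rw [← top_le_iff, ← hy]
  exact adjoin_le_iff.mpr (Set.singleton_subset_iff.mpr hpow)
end

section
/- Let L be a finite extension of ℚ and x ∈ L a primitive element (ℚ(x) = L). Fix k ∈ ℕ with k ≥ 1. If i₁, …, i_{k+1} are pairwise distinct natural numbers such that the fields ℚ((x + i₁)^k), …, ℚ((x + i_{k+1})^k) are all equal to a common field M, then M = L. -/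
/-- Let `L/ℚ` be finite, `x` a primitive element and `k ≥ 1`. If `i 0, …, i k` are pairwise
distinct natural numbers such that all the fields `ℚ((x + iⱼ)^k)` are equal to a common
intermediate field `M`, then `M = L`. -/
theorem common_field_of_shifted_powers_eq_top (L : Type*) [Field L] [Algebra ℚ L]
    [FiniteDimensional ℚ L] (x : L) (hx : IntermediateField.adjoin ℚ {x} = ⊤)
    (k : ℕ) (hk : 1 ≤ k) (i : Fin (k + 1) → ℕ) (hi : Function.Injective i)
    (M : IntermediateField ℚ L)
    (hM : ∀ j : Fin (k + 1), IntermediateField.adjoin ℚ {(x + (i j : L)) ^ k} = M) :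
    M = ⊤ := by
  have hy : ∀ j, (x + (i j : L)) ^ k ∈ M := fun j =>
    (hM j) ▸ IntermediateField.mem_adjoin_simple_self ℚ _
  set v : Fin (k + 1) → ℚ := fun j => (i j : ℚ) with hvdef
  have hv : Function.Injective v := fun a b h => hi (Nat.cast_injective h)
  set A : Matrix (Fin (k + 1)) (Fin (k + 1)) ℚ :=
    Matrix.of fun j m => v j ^ (k - (m : ℕ)) * (k.choose (m : ℕ) : ℚ) with hAdef
  have hA : A = (Matrix.vandermonde v).submatrix id Fin.revPerm *
      Matrix.diagonal (fun m : Fin (k + 1) => (k.choose (m : ℕ) : ℚ)) := by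
    ext j m
    simp [hAdef, Matrix.mul_apply, Matrix.diagonal, Matrix.vandermonde, Fin.rev,
      Nat.sub_sub_self (Nat.lt_succ_iff.mp m.isLt)]
  have hdet : A.det ≠ 0 := by
    rw [hA, Matrix.det_mul, Matrix.det_permute', Matrix.det_diagonal]
    refine mul_ne_zero (mul_ne_zero ?_ (Matrix.det_vandermonde_ne_zero_iff.mpr hv)) ?_
    · simp
    · exact Finset.prod_ne_zero_iff.mpr fun m _ =>
        Nat.cast_ne_zero.mpr (Nat.choose_pos (Nat.lt_succ_iff.mp m.isLt)).ne'
  have hinv : A⁻¹ * A = 1 := Matrix.nonsing_inv_mul A (isUnit_iff_ne_zero.mpr hdet)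
  -- expansion of each power
  have hexp : ∀ j, (x + (i j : L)) ^ k = ∑ n : Fin (k + 1), A j n • x ^ (n : ℕ) := by
    intro j
    rw [add_pow, ← Fin.sum_univ_eq_sum_range]
    refine Finset.sum_congr rfl fun n _ => ?_
    have : A j n • x ^ (n : ℕ) = algebraMap ℚ L (A j n) * x ^ (n : ℕ) :=
      Algebra.smul_def _ _
    rw [this]
    simp only [hAdef, Matrix.of_apply, hvdef, map_mul, map_pow, map_natCast]
    ring
  -- x is a combination of the (x + i j)^k
  have key : ∑ j : Fin (k + 1), A⁻¹ ⟨1, by omega⟩ j • (x + (i j : L)) ^ k = x := by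
    conv_lhs => rw [Finset.sum_congr rfl fun j _ => by rw [hexp j]]
    have t1 : ∀ (c : ℚ) (f : Fin (k+1) → L), c • ∑ n, f n = ∑ n, c • f n :=
      fun c f => by simp only [Algebra.smul_def, Finset.mul_sum]
    simp only [t1, smul_smul]
    rw [Finset.sum_comm]
    have step : ∀ n : Fin (k + 1),
        ∑ j : Fin (k + 1), (A⁻¹ ⟨1, by omega⟩ j * A j n) • x ^ (n : ℕ)
          = ((A⁻¹ * A) ⟨1, by omega⟩ n) • x ^ (n : ℕ) := fun n => by
      rw [Matrix.mul_apply]; exact Finset.sum_smul.symm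
    rw [Finset.sum_congr rfl fun n _ => step n, hinv]
    simp [Matrix.one_apply, ite_smul]
  have hxM : x ∈ M := by
    rw [← key]
    exact Submodule.sum_smul_mem (Subalgebra.toSubmodule M.toSubalgebra) _
      (fun j _ => hy j)
  rw [eq_top_iff, ← hx]
  exact IntermediateField.adjoin_le_iff.mpr (by simpa using hxM)
end

section
/- Let L be a number field with ring of integers 𝒪 and V ≤ SL₂(𝒪) a subgroup of finite index. Let N₀ be such that every element of SL₂(L) is a product of at most N₀ elementary matrices. Then every element of SL₂(L) is a product of at most 3N₀ matrices, each from SL₂(ℚ) or from V. -/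
/-- The upper unitriangular matrix `u₊(r) = [[1, r], [0, 1]]` in `SL₂(L)`. -/
def upperUni {L : Type*} [Field L] (r : L) : Matrix.SpecialLinearGroup (Fin 2) L :=
  ⟨!![1, r; 0, 1], by simp [Matrix.det_fin_two_of]⟩

/-- The lower unitriangular matrix `u₋(r) = [[1, 0], [r, 1]]` in `SL₂(L)`. -/
def lowerUni {L : Type*} [Field L] (r : L) : Matrix.SpecialLinearGroup (Fin 2) L :=
  ⟨!![1, 0; r, 1], by simp [Matrix.det_fin_two_of]⟩

section Aux

open Matrix NumberField

/-- Upper unitriangular matrix over a commutative ring. -/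
def upperUniR {R : Type*} [CommRing R] (r : R) : Matrix.SpecialLinearGroup (Fin 2) R :=
  ⟨!![1, r; 0, 1], by simp [Matrix.det_fin_two_of]⟩

/-- Lower unitriangular matrix over a commutative ring. -/
def lowerUniR {R : Type*} [CommRing R] (r : R) : Matrix.SpecialLinearGroup (Fin 2) R :=
  ⟨!![1, 0; r, 1], by simp [Matrix.det_fin_two_of]⟩

/-- Diagonal matrix `diag(t, t⁻¹)` in `SL₂`. -/
def diagSL {F : Type*} [Field F] (t : F) (ht : t ≠ 0) : Matrix.SpecialLinearGroup (Fin 2) F :=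
  ⟨!![t, 0; 0, t⁻¹], by simp [Matrix.det_fin_two_of, mul_inv_cancel₀ ht]⟩

lemma upperUniR_mul {R : Type*} [CommRing R] (r s : R) :
    upperUniR r * upperUniR s = upperUniR (r + s) := by
  apply Subtype.ext
  rw [Matrix.SpecialLinearGroup.coe_mul]
  simp [upperUniR, Matrix.SpecialLinearGroup.coe_mul, Matrix.mul_fin_two, add_comm]

lemma lowerUniR_mul {R : Type*} [CommRing R] (r s : R) :
    lowerUniR r * lowerUniR s = lowerUniR (r + s) := by
  apply Subtype.ext
  rw [Matrix.SpecialLinearGroup.coe_mul]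
  simp [lowerUniR, Matrix.SpecialLinearGroup.coe_mul, Matrix.mul_fin_two, add_comm]

lemma upperUniR_pow {R : Type*} [CommRing R] (r : R) (n : ℕ) :
    (upperUniR r) ^ n = upperUniR ((n : R) * r) := by
  induction n with
  | zero => apply Subtype.ext; rw [pow_zero]; simp [upperUniR, Matrix.one_fin_two]
  | succ n ih =>
    rw [pow_succ, ih, upperUniR_mul]
    congr 1
    push_cast
    ring

lemma lowerUniR_pow {R : Type*} [CommRing R] (r : R) (n : ℕ) :
    (lowerUniR r) ^ n = lowerUniR ((n : R) * r) := by
  induction n with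
  | zero => apply Subtype.ext; rw [pow_zero]; simp [lowerUniR, Matrix.one_fin_two]
  | succ n ih =>
    rw [pow_succ, ih, lowerUniR_mul]
    congr 1
    push_cast
    ring

lemma map_upperUniR {R S : Type*} [CommRing R] [Field S] (f : R →+* S) (r : R) :
    Matrix.SpecialLinearGroup.map f (upperUniR r) = upperUni (f r) := by
  apply Subtype.ext
  show (upperUniR r : Matrix (Fin 2) (Fin 2) R).map f = _
  ext i j
  fin_cases i <;> fin_cases j <;> simp [upperUniR, upperUni]

lemma map_lowerUniR {R S : Type*} [CommRing R] [Field S] (f : R →+* S) (r : R) :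
    Matrix.SpecialLinearGroup.map f (lowerUniR r) = lowerUni (f r) := by
  apply Subtype.ext
  show (lowerUniR r : Matrix (Fin 2) (Fin 2) R).map f = _
  ext i j
  fin_cases i <;> fin_cases j <;> simp [lowerUniR, lowerUni]

lemma map_diagSL {F K : Type*} [Field F] [Field K] (f : F →+* K) (t : F) (ht : t ≠ 0) :
    Matrix.SpecialLinearGroup.map f (diagSL t ht) =
      diagSL (f t) ((map_ne_zero f).mpr ht) := by
  apply Subtype.ext
  show (diagSL t ht : Matrix (Fin 2) (Fin 2) F).map f = _
  ext i j
  fin_cases i <;> fin_cases j <;> simp [diagSL, map_inv₀]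

/-- For every `x : L` there is a nonzero rational `t` with `u₊(t² x)` in the image of `V`,
and likewise for `u₋`. -/
lemma exists_rat_sq_mem (L : Type*) [Field L] [NumberField L]
    (V : Subgroup (Matrix.SpecialLinearGroup (Fin 2) (NumberField.RingOfIntegers L)))
    (hV : V.FiniteIndex) (x : L) :
    ∃ t : ℚ, t ≠ 0 ∧
      upperUni ((algebraMap ℚ L t) ^ 2 * x) ∈ V.map (Matrix.SpecialLinearGroup.map
        (algebraMap (NumberField.RingOfIntegers L) L)) ∧
      lowerUni ((algebraMap ℚ L t) ^ 2 * x) ∈ V.map (Matrix.SpecialLinearGroup.map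
        (algebraMap (NumberField.RingOfIntegers L) L)) := by
  -- find an integer multiple of x that is an algebraic integer
  have halgQ : IsAlgebraic ℚ x := Algebra.IsAlgebraic.isAlgebraic x
  have halg : IsAlgebraic ℤ x := (IsFractionRing.isAlgebraic_iff ℤ ℚ L).mpr halgQ
  obtain ⟨a, ha, haz⟩ := halg.exists_integral_multiple
  set z : NumberField.RingOfIntegers L := ⟨a • x, haz⟩ with hzdef
  have hz : algebraMap ℤ L a * x = algebraMap (NumberField.RingOfIntegers L) L z :=
    (Algebra.smul_def a x).symm
  -- w = a² x as an algebraic integer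
  set w : NumberField.RingOfIntegers L := algebraMap ℤ (NumberField.RingOfIntegers L) a * z
    with hwdef
  have hw : algebraMap (NumberField.RingOfIntegers L) L w = (algebraMap ℤ L a) ^ 2 * x := by
    rw [hwdef, _root_.map_mul, ← hz]
    have : algebraMap (NumberField.RingOfIntegers L) L (algebraMap ℤ (NumberField.RingOfIntegers L) a)
        = algebraMap ℤ L a := by
      rw [← IsScalarTower.algebraMap_apply]
    rw [this]; ring
  -- use finite index to find powers in V
  obtain ⟨n, hn0, _, hnV⟩ := Subgroup.exists_pow_mem_of_index_ne_zero hV.index_ne_zero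
    (upperUniR w)
  obtain ⟨n', hn'0, _, hn'V⟩ := Subgroup.exists_pow_mem_of_index_ne_zero hV.index_ne_zero
    (lowerUniR w)
  refine ⟨a * n * n', ?_, ?_, ?_⟩
  · have : (n : ℚ) ≠ 0 := Nat.cast_ne_zero.mpr hn0.ne'
    have : (n' : ℚ) ≠ 0 := Nat.cast_ne_zero.mpr hn'0.ne'
    have ha' : (a : ℚ) ≠ 0 := Int.cast_ne_zero.mpr ha
    positivity
  · -- upper
    have hmem : (upperUniR w) ^ ((n * n') ^ 2) ∈ V := by
      have : (upperUniR w) ^ ((n * n') ^ 2) = ((upperUniR w) ^ n) ^ (n * n' ^ 2) := by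
        rw [← pow_mul]; ring_nf
      rw [this]
      exact pow_mem hnV _
    refine ⟨_, hmem, ?_⟩
    rw [upperUniR_pow, map_upperUniR]
    congr 1
    rw [_root_.map_mul, hw]
    have : algebraMap (NumberField.RingOfIntegers L) L (((n * n' : ℕ) ^ 2 : ℕ) :
        NumberField.RingOfIntegers L) = ((n * n' : ℕ) ^ 2 : ℕ) := by
      simp [map_natCast]
    rw [this]
    have haq : algebraMap ℚ L ((a : ℚ) * n * n') = (algebraMap ℤ L a) * n * n' := by
      push_cast [_root_.map_mul]
      simp [map_intCast, map_natCast]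
    rw [haq]
    push_cast
    ring
  · -- lower
    have hmem : (lowerUniR w) ^ ((n * n') ^ 2) ∈ V := by
      have : (lowerUniR w) ^ ((n * n') ^ 2) = ((lowerUniR w) ^ n') ^ (n ^ 2 * n') := by
        rw [← pow_mul]; ring_nf
      rw [this]
      exact pow_mem hn'V _
    refine ⟨_, hmem, ?_⟩
    rw [lowerUniR_pow, map_lowerUniR]
    congr 1
    rw [_root_.map_mul, hw]
    have : algebraMap (NumberField.RingOfIntegers L) L (((n * n' : ℕ) ^ 2 : ℕ) :
        NumberField.RingOfIntegers L) = ((n * n' : ℕ) ^ 2 : ℕ) := by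
      simp [map_natCast]
    rw [this]
    have haq : algebraMap ℚ L ((a : ℚ) * n * n') = (algebraMap ℤ L a) * n * n' := by
      push_cast [_root_.map_mul]
      simp [map_intCast, map_natCast]
    rw [haq]
    push_cast
    ring

lemma diag_conj_upper {F : Type*} [Field F] (t : F) (ht : t ≠ 0) (r : F) :
    diagSL t⁻¹ (inv_ne_zero ht) * upperUni (t ^ 2 * r) * diagSL t ht = upperUni r := by
  apply Subtype.ext
  rw [Matrix.SpecialLinearGroup.coe_mul, Matrix.SpecialLinearGroup.coe_mul]
  simp only [Matrix.SpecialLinearGroup.coe_mul, diagSL, upperUni]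
  ext i j
  fin_cases i <;> fin_cases j <;>
    simp [Matrix.mul_fin_two] <;> field_simp <;> ring

lemma diag_conj_lower {F : Type*} [Field F] (t : F) (ht : t ≠ 0) (r : F) :
    diagSL t ht * lowerUni (t ^ 2 * r) * diagSL t⁻¹ (inv_ne_zero ht) = lowerUni r := by
  apply Subtype.ext
  rw [Matrix.SpecialLinearGroup.coe_mul, Matrix.SpecialLinearGroup.coe_mul]
  simp only [Matrix.SpecialLinearGroup.coe_mul, diagSL, lowerUni]
  ext i j
  fin_cases i <;> fin_cases j <;>
    simp [Matrix.mul_fin_two] <;> field_simp <;> ring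

end Aux

/-- Let `L` be a number field with ring of integers `𝒪`, `V ≤ SL₂(𝒪)` of finite index,
and suppose every element of `SL₂(L)` is a product of at most `N₀` elementary matrices.
Then every element of `SL₂(L)` is a product of at most `3N₀` matrices, each from
(the image of) `SL₂(ℚ)` or from `V`. -/
theorem SL2_bounded_generation_by_rationals_and_finite_index (L : Type*) [Field L]
    [NumberField L]
    (V : Subgroup (Matrix.SpecialLinearGroup (Fin 2) (NumberField.RingOfIntegers L)))
    (hV : V.FiniteIndex) (N₀ : ℕ)
    (hN₀ : ∀ g : Matrix.SpecialLinearGroup (Fin 2) L,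
      ∃ l : List (Matrix.SpecialLinearGroup (Fin 2) L), l.length ≤ N₀ ∧
        (∀ m ∈ l, ∃ r : L, m = upperUni r ∨ m = lowerUni r) ∧ l.prod = g) :
    ∀ g : Matrix.SpecialLinearGroup (Fin 2) L,
      ∃ l : List (Matrix.SpecialLinearGroup (Fin 2) L), l.length ≤ 3 * N₀ ∧
        (∀ m ∈ l,
          m ∈ (Matrix.SpecialLinearGroup.map (n := Fin 2) (algebraMap ℚ L)).range ∨
          m ∈ V.map (Matrix.SpecialLinearGroup.map
                (algebraMap (NumberField.RingOfIntegers L) L))) ∧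
        l.prod = g := by
  set P : Matrix.SpecialLinearGroup (Fin 2) L → Prop := fun m =>
    m ∈ (Matrix.SpecialLinearGroup.map (n := Fin 2) (algebraMap ℚ L)).range ∨
    m ∈ V.map (Matrix.SpecialLinearGroup.map
          (algebraMap (NumberField.RingOfIntegers L) L)) with hP
  -- decompose each elementary matrix as a product of three good matrices
  have elem : ∀ m : Matrix.SpecialLinearGroup (Fin 2) L,
      (∃ r : L, m = upperUni r ∨ m = lowerUni r) →
      ∃ A B C, P A ∧ P B ∧ P C ∧ A * B * C = m := by
    rintro m ⟨r, hm | hm⟩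
    · obtain ⟨t, ht, hup, _⟩ := exists_rat_sq_mem L V hV r
      set T := algebraMap ℚ L t with hT
      have hT0 : T ≠ 0 := (map_ne_zero _).mpr ht
      refine ⟨diagSL T⁻¹ (inv_ne_zero hT0), upperUni (T ^ 2 * r), diagSL T hT0, ?_, ?_, ?_, ?_⟩
      · left
        refine ⟨diagSL t⁻¹ (inv_ne_zero ht), ?_⟩
        rw [map_diagSL]
        congr 1
        rw [map_inv₀]
      · right; exact hup
      · left
        exact ⟨diagSL t ht, map_diagSL _ t ht⟩
      · rw [hm]; exact diag_conj_upper T hT0 r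
    · obtain ⟨t, ht, _, hlo⟩ := exists_rat_sq_mem L V hV r
      set T := algebraMap ℚ L t with hT
      have hT0 : T ≠ 0 := (map_ne_zero _).mpr ht
      refine ⟨diagSL T hT0, lowerUni (T ^ 2 * r), diagSL T⁻¹ (inv_ne_zero hT0), ?_, ?_, ?_, ?_⟩
      · left
        exact ⟨diagSL t ht, map_diagSL _ t ht⟩
      · right; exact hlo
      · left
        refine ⟨diagSL t⁻¹ (inv_ne_zero ht), ?_⟩
        rw [map_diagSL]
        congr 1
        rw [map_inv₀]
      · rw [hm]; exact diag_conj_lower T hT0 r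
  -- list induction
  have listlem : ∀ l : List (Matrix.SpecialLinearGroup (Fin 2) L),
      (∀ m ∈ l, ∃ r : L, m = upperUni r ∨ m = lowerUni r) →
      ∃ l' : List (Matrix.SpecialLinearGroup (Fin 2) L),
        l'.length = 3 * l.length ∧ (∀ m ∈ l', P m) ∧ l'.prod = l.prod := by
    intro l
    induction l with
    | nil => exact fun _ => ⟨[], by simp⟩
    | cons a l ih =>
      intro h
      obtain ⟨A, B, C, hA, hB, hC, hABC⟩ := elem a (h a List.mem_cons_self)
      obtain ⟨l', hlen, hmem, hprod⟩ := ih (fun m hm => h m (List.mem_cons_of_mem a hm))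
      refine ⟨A :: B :: C :: l', by simp [hlen]; ring, ?_, ?_⟩
      · intro m hm
        simp only [List.mem_cons] at hm
        rcases hm with hm | hm | hm | hm
        · exact hm ▸ hA
        · exact hm ▸ hB
        · exact hm ▸ hC
        · exact hmem m hm
      · simp only [List.prod_cons, hprod, ← hABC]
        group
  intro g
  obtain ⟨l, hlen, helem, hprod⟩ := hN₀ g
  obtain ⟨l', hlen', hmem', hprod'⟩ := listlem l helem
  exact ⟨l', by omega, hmem', hprod'.trans hprod⟩
end

section
/- Let k be a field and n ≥ 3. Then every quasi-morphism f : SLₙ(k) → ℝ is bounded. -/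
open Matrix

namespace QMSL

variable {k : Type*} [Field k] {n : ℕ}

/-- product of transvection matrices encoded by ((i,j), c) list -/
def TL (L : List ((Fin n × Fin n) × k)) : Matrix (Fin n) (Fin n) k :=
  (L.map fun e => Matrix.transvection e.1.1 e.1.2 e.2).prod

@[simp] lemma TL_nil : TL ([] : List ((Fin n × Fin n) × k)) = 1 := rfl

lemma TL_cons (e : (Fin n × Fin n) × k) (L : List ((Fin n × Fin n) × k)) :
    TL (e :: L) = Matrix.transvection e.1.1 e.1.2 e.2 * TL L := by
  simp [TL]

lemma TL_append (L1 L2 : List ((Fin n × Fin n) × k)) : TL (L1 ++ L2) = TL L1 * TL L2 := by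
  simp [TL]

lemma det_TL {L : List ((Fin n × Fin n) × k)} (h : ∀ e ∈ L, e.1.1 ≠ e.1.2) :
    (TL L).det = 1 := by
  induction L with
  | nil => simp
  | cons a t ih =>
      rw [TL_cons, det_mul, Matrix.det_transvection_of_ne _ _ (h a (by simp)), one_mul,
        ih (fun e he => h e (by simp [he]))]

/-- list of inverses, reversed -/
def negL (L : List ((Fin n × Fin n) × k)) : List ((Fin n × Fin n) × k) :=
  L.reverse.map fun e => (e.1, -e.2)

lemma mem_negL {L : List ((Fin n × Fin n) × k)} {e} (he : e ∈ negL L) :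
    ∃ e' ∈ L, e = (e'.1, -e'.2) := by
  simp only [negL, List.mem_map, List.mem_reverse] at he
  obtain ⟨a, ha, rfl⟩ := he
  exact ⟨a, ha, rfl⟩

lemma TL_mul_negL {L : List ((Fin n × Fin n) × k)} (h : ∀ e ∈ L, e.1.1 ≠ e.1.2) :
    TL L * TL (negL L) = 1 := by
  induction L with
  | nil => simp [negL]
  | cons a t ih =>
      have hne : a.1.1 ≠ a.1.2 := h a (by simp)
      have : negL (a :: t) = negL t ++ [(a.1, -a.2)] := by simp [negL]
      rw [this, TL_cons, TL_append, mul_assoc, ← mul_assoc (TL t),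
        ih (fun e he => h e (by simp [he])), one_mul]
      rw [TL_cons, TL_nil, mul_one,
        Matrix.transvection_mul_transvection_same _ _ hne, add_neg_cancel,
        Matrix.transvection_zero]


/-- `M` agrees with the identity outside the top-left `r × r` block. -/
def Blk (r : ℕ) (M : Matrix (Fin n) (Fin n) k) : Prop :=
  ∀ i j : Fin n, (r ≤ (i : ℕ) ∨ r ≤ (j : ℕ)) → M i j = (1 : Matrix (Fin n) (Fin n) k) i j

lemma blk_left (r : ℕ) {a b : Fin n} (ha : (a : ℕ) < r) (hb : (b : ℕ) < r) (c : k)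
    {M : Matrix (Fin n) (Fin n) k} (hM : Blk r M) :
    Blk r (Matrix.transvection a b c * M) := by
  intro i j hij
  by_cases hia : i = a
  · subst hia
    have hj : r ≤ (j : ℕ) := by omega
    have hbj : b ≠ j := by intro h; subst h; omega
    rw [Matrix.transvection_mul_apply_same, hM i j hij, hM b j (Or.inr hj),
      Matrix.one_apply_ne hbj, mul_zero, add_zero]
  · rw [Matrix.transvection_mul_apply_of_ne _ _ _ _ hia, hM i j hij]

lemma blk_right (r : ℕ) {a b : Fin n} (ha : (a : ℕ) < r) (hb : (b : ℕ) < r) (c : k)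
    {M : Matrix (Fin n) (Fin n) k} (hM : Blk r M) :
    Blk r (M * Matrix.transvection a b c) := by
  intro i j hij
  by_cases hjb : j = b
  · subst hjb
    have hi : r ≤ (i : ℕ) := by omega
    have hia : a ≠ i := by intro h; subst h; omega
    rw [Matrix.mul_transvection_apply_same, hM i j hij, hM i a (Or.inl hi),
      Matrix.one_apply_ne (Ne.symm hia), mul_zero, add_zero]
  · rw [Matrix.mul_transvection_apply_of_ne _ _ _ _ hjb, hM i j hij]

lemma blk_TL_left (r : ℕ) {L : List ((Fin n × Fin n) × k)}
    (h : ∀ e ∈ L, (e.1.1 : ℕ) < r ∧ (e.1.2 : ℕ) < r)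
    {M : Matrix (Fin n) (Fin n) k} (hM : Blk r M) : Blk r (TL L * M) := by
  induction L with
  | nil => simpa using hM
  | cons a t ih =>
      rw [TL_cons, mul_assoc]
      exact blk_left r (h a (by simp)).1 (h a (by simp)).2 _
        (ih (fun e he => h e (by simp [he])))

lemma blk_TL_right (r : ℕ) {L : List ((Fin n × Fin n) × k)}
    (h : ∀ e ∈ L, (e.1.1 : ℕ) < r ∧ (e.1.2 : ℕ) < r)
    {M : Matrix (Fin n) (Fin n) k} (hM : Blk r M) : Blk r (M * TL L) := by
  induction L generalizing M with
  | nil => simpa using hM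
  | cons a t ih =>
      rw [TL_cons, ← mul_assoc]
      exact ih (fun e he => h e (by simp [he]))
        (blk_right r (h a (by simp)).1 (h a (by simp)).2 _ hM)

/-- column clearing: entries of `(∏ transvection i p (c i)) * M` -/
lemma colClear (p : Fin n) (c : Fin n → k) (M : Matrix (Fin n) (Fin n) k) :
    ∀ (L : List (Fin n)), L.Nodup → p ∉ L → ∀ a b : Fin n,
      ((L.map fun i => Matrix.transvection i p (c i)).prod * M) a b =
        if a ∈ L then M a b + c a * M p b else M a b := by
  intro L
  induction L generalizing M with
  | nil => simp
  | cons hd tl ih =>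
      intro hnd hp a b
      have hptl : p ∉ tl := fun h => hp (by simp [h])
      have hhdtl : hd ∉ tl := (List.nodup_cons.1 hnd).1
      have hnd' : tl.Nodup := (List.nodup_cons.1 hnd).2
      have hphd : p ≠ hd := fun h => hp (by simp [h])
      rw [List.map_cons, List.prod_cons, mul_assoc]
      by_cases hahd : a = hd
      · subst hahd
        rw [Matrix.transvection_mul_apply_same]
        rw [ih M hnd' hptl, ih M hnd' hptl]
        simp [hhdtl, hptl]
      · rw [Matrix.transvection_mul_apply_of_ne _ _ _ _ hahd, ih M hnd' hptl]
        simp [List.mem_cons, hahd]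

/-- row clearing: entries of `M * (∏ transvection p j (c j))` -/
lemma rowClear (p : Fin n) (c : Fin n → k) (M : Matrix (Fin n) (Fin n) k) :
    ∀ (L : List (Fin n)), L.Nodup → p ∉ L → ∀ a b : Fin n,
      (M * (L.map fun j => Matrix.transvection p j (c j)).prod) a b =
        if b ∈ L then M a b + c b * M a p else M a b := by
  intro L
  induction L generalizing M with
  | nil => simp
  | cons hd tl ih =>
      intro hnd hp a b
      have hptl : p ∉ tl := fun h => hp (by simp [h])
      have hhdtl : hd ∉ tl := (List.nodup_cons.1 hnd).1
      have hnd' : tl.Nodup := (List.nodup_cons.1 hnd).2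
      have hphd : p ≠ hd := fun h => hp (by simp [h])
      rw [List.map_cons, List.prod_cons, ← mul_assoc]
      rw [ih (M * Matrix.transvection p hd (c hd)) hnd' hptl]
      by_cases hbtl : b ∈ tl
      · have hbhd : b ≠ hd := fun h => hhdtl (h ▸ hbtl)
        rw [if_pos hbtl, if_pos (by simp [hbtl]),
          Matrix.mul_transvection_apply_of_ne _ _ _ _ hbhd,
          Matrix.mul_transvection_apply_of_ne _ _ _ _ hphd]
      · rw [if_neg hbtl]
        by_cases hbhd : b = hd
        · subst hbhd
          rw [if_pos (by simp), Matrix.mul_transvection_apply_same]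
        · rw [if_neg (by simp [hbhd, hbtl]),
            Matrix.mul_transvection_apply_of_ne _ _ _ _ hbhd]

lemma fact_blk : ∀ (r : ℕ) (M : Matrix (Fin n) (Fin n) k), M.det = 1 → Blk r M →
    ∃ L : List ((Fin n × Fin n) × k),
      (∀ e ∈ L, e.1.1 ≠ e.1.2) ∧ L.length ≤ (2 * n + 2) * r ∧ M = TL L := by
  intro r
  induction r with
  | zero =>
      intro M _ hB
      refine ⟨[], by simp, by simp, ?_⟩
      rw [TL_nil]
      ext i j
      exact hB i j (Or.inl (Nat.zero_le _))
  | succ r ih =>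
      intro M hdet hB
      by_cases hrn : r < n
      · rcases Nat.eq_zero_or_pos r with rfl | hr1
        · -- block of size 1 : M = 1 from det
          have hv : ∀ i j : Fin n, i ≠ j → M i j = 0 := by
            intro i j hij
            have hij' : (i : ℕ) ≠ (j : ℕ) := fun h => hij (Fin.ext h)
            have := hB i j (by omega)
            rwa [Matrix.one_apply_ne hij] at this
          have h1 : ∀ i : Fin n, (1 : ℕ) ≤ (i : ℕ) → M i i = 1 := by
            intro i hi
            have := hB i i (Or.inl hi)
            rwa [Matrix.one_apply_eq] at this
          have hdiag : M = Matrix.diagonal (fun i => M i i) := by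
            ext i j
            by_cases h : i = j
            · subst h; rw [Matrix.diagonal_apply_eq]
            · rw [Matrix.diagonal_apply_ne _ h]; exact hv i j h
          set z : Fin n := ⟨0, by omega⟩ with hz
          have hM00 : M z z = 1 := by
            rw [hdiag, Matrix.det_diagonal] at hdet
            have := Finset.prod_eq_single (M := k) (a := z) (f := fun i => M i i)
              (fun b _ hb => h1 b (by
                have : (b : ℕ) ≠ 0 := fun hb0 => hb (Fin.ext hb0)
                omega)) (fun h => absurd (Finset.mem_univ z) h)
            rw [this] at hdet
            exact hdet
          refine ⟨[], by simp, by simp, ?_⟩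
          rw [TL_nil]
          ext i j
          by_cases h : i = j
          · subst h
            rw [Matrix.one_apply_eq]
            rcases Nat.eq_zero_or_pos (i : ℕ) with h0 | h0
            · have : i = z := Fin.ext h0
              rw [this]; exact hM00
            · exact h1 i h0
          · rw [Matrix.one_apply_ne h]; exact hv i j h
        · -- main step
          set p : Fin n := ⟨r, hrn⟩ with hp
          have hpval : (p : ℕ) = r := rfl
          -- Pivot phase : find La with ≤ 2 transvections making entry (p,p) = 1
          have pivot : ∃ La : List ((Fin n × Fin n) × k),
              (∀ e ∈ La, e.1.1 ≠ e.1.2) ∧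
              (∀ e ∈ La, (e.1.1 : ℕ) < r + 1 ∧ (e.1.2 : ℕ) < r + 1) ∧
              La.length ≤ 2 ∧ (TL La * M) p p = 1 := by
            by_cases hA : ∃ i : Fin n, i ≠ p ∧ M i p ≠ 0
            · obtain ⟨i, hip, hMip⟩ := hA
              have hilt : (i : ℕ) < r + 1 := by
                by_contra hge
                have := hB i p (Or.inl (by omega))
                rw [Matrix.one_apply_ne hip] at this
                exact hMip this
              refine ⟨[((p, i), (1 - M p p) / M i p)], ?_, ?_, by simp, ?_⟩
              · intro e he
                simp only [List.mem_singleton] at he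
                subst he
                exact hip.symm
              · intro e he
                simp only [List.mem_singleton] at he
                subst he
                exact ⟨show (p : ℕ) < r + 1 by rw [hpval]; omega, show (i : ℕ) < r + 1 from hilt⟩
              · rw [TL_cons, TL_nil, mul_one]
                rw [Matrix.transvection_mul_apply_same]
                field_simp
                ring
            · push_neg at hA
              have hMpp : M p p ≠ 0 := by
                intro h0
                have : M.det = 0 := by
                  apply Matrix.det_eq_zero_of_column_eq_zero p
                  intro i
                  by_cases hip : i = p
                  · subst hip; exact h0
                  · exact hA i hip
                rw [hdet] at this
                exact one_ne_zero this
              set q : Fin n := ⟨0, by omega⟩ with hq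
              have hqp : q ≠ p := by
                intro h
                have : (0 : ℕ) = r := congrArg Fin.val h
                omega
              refine ⟨[((p, q), (1 - M p p) / M p p), ((q, p), 1)], ?_, ?_, by simp, ?_⟩
              · intro e he
                simp only [List.mem_cons, List.mem_singleton] at he
                rcases he with rfl | rfl | h
                · exact hqp.symm
                · exact hqp
                · exact absurd h List.not_mem_nil
              · intro e he
                simp only [List.mem_cons, List.mem_singleton] at he
                rcases he with rfl | rfl | h
                · exact ⟨show (p : ℕ) < r + 1 by rw [hpval]; omega,
                    show (q : ℕ) < r + 1 by simp [hq]⟩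
                · exact ⟨show (q : ℕ) < r + 1 by simp [hq],
                    show (p : ℕ) < r + 1 by rw [hpval]; omega⟩
                · exact absurd h List.not_mem_nil
              · rw [TL_cons, TL_cons, TL_nil, mul_one, mul_assoc]
                set M' := Matrix.transvection q p (1 : k) * M with hM'
                have h1 : M' p p = M p p :=
                  Matrix.transvection_mul_apply_of_ne _ _ _ _ hqp.symm _ M
                have h2 : M' q p = M p p := by
                  rw [hM', Matrix.transvection_mul_apply_same, hA q hqp, one_mul, zero_add]
                rw [Matrix.transvection_mul_apply_same, h1, h2]
                field_simp
                ring
          obtain ⟨La, hLane, hLalt, hLalen, hM1pp⟩ := pivot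
          set M₁ := TL La * M with hM1def
          have hB1 : Blk (r + 1) M₁ := blk_TL_left _ hLalt hB
          -- column clearing
          set Lfin : List (Fin n) := (Finset.univ.filter fun i : Fin n => (i : ℕ) < r).toList
            with hLfin
          have hmemLfin : ∀ a : Fin n, a ∈ Lfin ↔ (a : ℕ) < r := by
            intro a; simp [hLfin]
          have hnodup : Lfin.Nodup := Finset.nodup_toList _
          have hpLfin : p ∉ Lfin := by
            rw [hmemLfin]; omega
          have hLfinlen : Lfin.length ≤ n := by
            rw [hLfin, Finset.length_toList]
            calc (Finset.univ.filter fun i : Fin n => (i : ℕ) < r).card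
                ≤ Finset.univ.card := Finset.card_filter_le _ _
              _ = n := by simp
          set c1 : Fin n → k := fun i => -(M₁ i p) with hc1
          set Lcol : List ((Fin n × Fin n) × k) := Lfin.map fun i => ((i, p), c1 i) with hLcol
          have hTLcol : TL Lcol = (Lfin.map fun i => Matrix.transvection i p (c1 i)).prod := by
            rw [TL, hLcol, List.map_map]
            rfl
          set M₂ := TL Lcol * M₁ with hM2def
          have hM2 : ∀ a b : Fin n, M₂ a b =
              if a ∈ Lfin then M₁ a b + c1 a * M₁ p b else M₁ a b := by
            intro a b
            rw [hM2def, hTLcol]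
            exact colClear p c1 M₁ Lfin hnodup hpLfin a b
          have hLcolne : ∀ e ∈ Lcol, e.1.1 ≠ e.1.2 := by
            intro e he
            rw [hLcol] at he
            obtain ⟨i, hi, rfl⟩ := List.mem_map.1 he
            rw [hmemLfin] at hi
            intro h
            have : (i : ℕ) = r := congrArg Fin.val h
            omega
          have hLcollt : ∀ e ∈ Lcol, (e.1.1 : ℕ) < r + 1 ∧ (e.1.2 : ℕ) < r + 1 := by
            intro e he
            rw [hLcol] at he
            obtain ⟨i, hi, rfl⟩ := List.mem_map.1 he
            rw [hmemLfin] at hi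
            exact ⟨show (i : ℕ) < r + 1 by omega,
              show (p : ℕ) < r + 1 by rw [hpval]; omega⟩
          have hB2 : Blk (r + 1) M₂ := blk_TL_left _ hLcollt hB1
          have hM2pp : M₂ p p = 1 := by
            rw [hM2 p p, if_neg hpLfin]; exact hM1pp
          have hM2colp : ∀ i : Fin n, i ≠ p → M₂ i p = 0 := by
            intro i hip
            have hival : (i : ℕ) ≠ r := fun h => hip (Fin.ext h)
            by_cases hi : (i : ℕ) < r
            · rw [hM2 i p, if_pos ((hmemLfin i).2 hi), hc1, hM1pp]
              ring
            · have := hB2 i p (Or.inl (by omega))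
              rwa [Matrix.one_apply_ne hip] at this
          have hM2prow : ∀ j : Fin n, M₂ p j = M₁ p j := by
            intro j; rw [hM2 p j, if_neg hpLfin]
          -- row clearing
          set c2 : Fin n → k := fun j => -(M₂ p j) with hc2
          set Lrow : List ((Fin n × Fin n) × k) := Lfin.map fun j => ((p, j), c2 j) with hLrow
          have hTLrow : TL Lrow = (Lfin.map fun j => Matrix.transvection p j (c2 j)).prod := by
            rw [TL, hLrow, List.map_map]
            rfl
          set M₃ := M₂ * TL Lrow with hM3def
          have hM3 : ∀ a b : Fin n, M₃ a b =
              if b ∈ Lfin then M₂ a b + c2 b * M₂ a p else M₂ a b := by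
            intro a b
            rw [hM3def, hTLrow]
            exact rowClear p c2 M₂ Lfin hnodup hpLfin a b
          have hLrowne : ∀ e ∈ Lrow, e.1.1 ≠ e.1.2 := by
            intro e he
            rw [hLrow] at he
            obtain ⟨j, hj, rfl⟩ := List.mem_map.1 he
            rw [hmemLfin] at hj
            intro h
            have : r = (j : ℕ) := congrArg Fin.val h
            omega
          have hLrowlt : ∀ e ∈ Lrow, (e.1.1 : ℕ) < r + 1 ∧ (e.1.2 : ℕ) < r + 1 := by
            intro e he
            rw [hLrow] at he
            obtain ⟨j, hj, rfl⟩ := List.mem_map.1 he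
            rw [hmemLfin] at hj
            exact ⟨show (p : ℕ) < r + 1 by rw [hpval]; omega,
              show (j : ℕ) < r + 1 by omega⟩
          have hB3 : Blk (r + 1) M₃ := blk_TL_right _ hLrowlt hB2
          have hBr3 : Blk r M₃ := by
            intro i j hij
            by_cases hbig : r + 1 ≤ (i : ℕ) ∨ r + 1 ≤ (j : ℕ)
            · exact hB3 i j hbig
            · push_neg at hbig
              by_cases hjp : j = p
              · subst hjp
                rw [hM3 i p, if_neg hpLfin]
                by_cases hipp : i = p
                · subst hipp; rw [hM2pp, Matrix.one_apply_eq]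
                · rw [hM2colp i hipp, Matrix.one_apply_ne hipp]
              · have hjval : (j : ℕ) ≠ r := fun h => hjp (Fin.ext h)
                have hi : (i : ℕ) = r := by omega
                have hip : i = p := Fin.ext hi
                have hjlt : (j : ℕ) < r := by omega
                rw [hip, hM3 p j, if_pos ((hmemLfin j).2 hjlt), hM2pp,
                  Matrix.one_apply_ne (Ne.symm hjp)]
                simp [hc2]
          have hdet3 : M₃.det = 1 := by
            rw [hM3def, hM2def, hM1def, Matrix.det_mul, Matrix.det_mul, Matrix.det_mul,
              det_TL hLrowne, det_TL hLcolne, det_TL hLane, hdet]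
            ring
          obtain ⟨L', hL'ne, hL'len, hL'eq⟩ := ih M₃ hdet3 hBr3
          set A : List ((Fin n × Fin n) × k) := Lcol ++ La with hA
          have hAne : ∀ e ∈ A, e.1.1 ≠ e.1.2 := by
            intro e he
            rcases List.mem_append.1 he with h | h
            · exact hLcolne e h
            · exact hLane e h
          have hM3A : M₃ = TL A * M * TL Lrow := by
            rw [hM3def, hM2def, hM1def, hA, TL_append]
            simp only [mul_assoc]
          have h1 : TL (negL A) * TL A = 1 := mul_eq_one_comm.mp (TL_mul_negL hAne)
          have h3 : TL Lrow * TL (negL Lrow) = 1 := TL_mul_negL hLrowne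
          have hMeq : TL (negL A) * M₃ * TL (negL Lrow) = M := by
            rw [hM3A,
              show TL A * M * TL Lrow = TL A * (M * TL Lrow) from mul_assoc _ _ _,
              ← mul_assoc (TL (negL A)) (TL A), h1, one_mul, mul_assoc, h3, mul_one]
          refine ⟨negL A ++ L' ++ negL Lrow, ?_, ?_, ?_⟩
          · intro e he
            rcases List.mem_append.1 he with h | h
            · rcases List.mem_append.1 h with h | h
              · obtain ⟨e', he', rfl⟩ := mem_negL h
                exact hAne e' he'
              · exact hL'ne e h
            · obtain ⟨e', he', rfl⟩ := mem_negL h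
              exact hLrowne e' he'
          · have l1 : (negL A).length = A.length := by simp [negL]
            have l2 : (negL Lrow).length = Lrow.length := by simp [negL]
            have l3 : A.length = Lcol.length + La.length := by simp [hA]
            have l4 : Lcol.length = Lfin.length := by simp [hLcol]
            have l5 : Lrow.length = Lfin.length := by simp [hLrow]
            simp only [List.length_append, l1, l2, l3, l4, l5]
            rw [show (2 * n + 2) * (r + 1) = (2 * n + 2) * r + (2 * n + 2) from by ring]
            linarith [hLfinlen, hLalen, hL'len]
          · rw [TL_append, TL_append, ← hL'eq]
            rw [← hMeq]
      · -- r ≥ n : the hypothesis at level r is also vacuous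
        have hB' : Blk r M := by
          intro i j hij
          have hi := i.isLt
          have hj := j.isLt
          omega
        obtain ⟨L, h1, h2, h3⟩ := ih M hdet hB'
        exact ⟨L, h1, le_trans h2 (Nat.mul_le_mul_left _ (Nat.le_succ r)), h3⟩

/-! ### Lifting to the special linear group -/

/-- the transvection as an element of `SL_n` -/
def tv (i j : Fin n) (h : i ≠ j) (c : k) : Matrix.SpecialLinearGroup (Fin n) k :=
  ⟨Matrix.transvection i j c, Matrix.det_transvection_of_ne i j h c⟩

lemma coe_pmap_prod : ∀ (L : List ((Fin n × Fin n) × k)) (H : ∀ e ∈ L, e.1.1 ≠ e.1.2),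
    (((L.pmap (fun (e : (Fin n × Fin n) × k) (h : e.1.1 ≠ e.1.2) => tv e.1.1 e.1.2 h e.2) H).prod :
        Matrix.SpecialLinearGroup (Fin n) k) : Matrix (Fin n) (Fin n) k) = TL L := by
  intro L
  induction L with
  | nil => intro H; simp [TL]
  | cons a t ih =>
      intro H
      simp only [List.pmap]
      rw [List.prod_cons, TL_cons, Matrix.SpecialLinearGroup.coe_mul,
        ih (fun e he => H e (List.mem_cons_of_mem a he))]
      rfl

lemma sl_fact (g : Matrix.SpecialLinearGroup (Fin n) k) :
    ∃ Lg : List (Matrix.SpecialLinearGroup (Fin n) k),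
      (∀ x ∈ Lg, ∃ (i j : Fin n) (h : i ≠ j) (c : k), x = tv i j h c) ∧
      Lg.length ≤ (2 * n + 2) * n ∧ g = Lg.prod := by
  have hB : Blk n (g : Matrix (Fin n) (Fin n) k) := by
    intro i j hij
    have hi := i.isLt
    have hj := j.isLt
    omega
  obtain ⟨L, hne, hlen, heq⟩ := fact_blk n (g : Matrix (Fin n) (Fin n) k) g.prop hB
  refine ⟨L.pmap (fun (e : (Fin n × Fin n) × k) (h : e.1.1 ≠ e.1.2) => tv e.1.1 e.1.2 h e.2) hne, ?_, ?_, ?_⟩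
  · intro x hx
    obtain ⟨e, he, hx'⟩ := List.mem_pmap.1 hx
    exact ⟨e.1.1, e.1.2, hne e he, e.2, hx'.symm⟩
  · rw [List.length_pmap]; exact hlen
  · exact Subtype.coe_injective (heq.trans (coe_pmap_prod L hne).symm)

/-! ### Quasimorphism estimates -/

section QM

variable (f : Matrix.SpecialLinearGroup (Fin n) k → ℝ) {D : ℝ}
  (hD : ∀ g h : Matrix.SpecialLinearGroup (Fin n) k, |f (g * h) - f g - f h| ≤ D)

include hD

lemma hD_nonneg : 0 ≤ D := le_trans (abs_nonneg _) (hD 1 1)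

lemma f_mul_bound (g h : Matrix.SpecialLinearGroup (Fin n) k) :
    |f (g * h)| ≤ |f g| + |f h| + D := by
  have h1 := abs_le.1 (hD g h)
  have h2 := le_abs_self (f g)
  have h3 := neg_abs_le (f g)
  have h4 := le_abs_self (f h)
  have h5 := neg_abs_le (f h)
  rw [abs_le]
  constructor <;> linarith

lemma f_conj_bound (g h : Matrix.SpecialLinearGroup (Fin n) k) :
    |f (h * g * h⁻¹)| ≤ |f g| + |f 1| + 3 * D := by
  have h1 := abs_le.1 (hD (h * g) h⁻¹)
  have h2 := abs_le.1 (hD h g)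
  have h3 := abs_le.1 (hD h h⁻¹)
  rw [mul_inv_cancel] at h3
  have h4 := le_abs_self (f g)
  have h5 := neg_abs_le (f g)
  have h6 := le_abs_self (f 1)
  have h7 := neg_abs_le (f 1)
  rw [abs_le]
  constructor <;> linarith

lemma f_prod_bound {B : ℝ} :
    ∀ L : List (Matrix.SpecialLinearGroup (Fin n) k), (∀ x ∈ L, |f x| ≤ B) →
      |f L.prod| ≤ |f 1| + L.length * (B + D) := by
  intro L
  induction L with
  | nil => simp
  | cons a t ih =>
      intro hL
      have h1 := f_mul_bound f hD a t.prod
      have h2 := ih (fun x hx => hL x (List.mem_cons_of_mem a hx))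
      have h3 := hL a (List.mem_cons_self)
      rw [List.prod_cons, List.length_cons]
      push_cast
      calc |f (a * t.prod)| ≤ |f a| + |f t.prod| + D := h1
    _ ≤ B + (|f 1| + t.length * (B + D)) + D := by linarith
    _ = |f 1| + (t.length + 1) * (B + D) := by ring

end QM

lemma exists_third (hn : 3 ≤ n) (i j : Fin n) : ∃ l : Fin n, l ≠ i ∧ l ≠ j := by
  by_contra hcon
  push_neg at hcon
  have hsub : (Finset.univ : Finset (Fin n)) ⊆ {i, j} := by
    intro m _
    simp only [Finset.mem_insert, Finset.mem_singleton]
    by_cases hmi : m = i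
    · exact Or.inl hmi
    · exact Or.inr (hcon m hmi)
  have h1 := Finset.card_le_card hsub
  have h2 : ({i, j} : Finset (Fin n)).card ≤ 2 :=
    le_trans (Finset.card_insert_le _ _) (by simp)
  rw [Finset.card_univ, Fintype.card_fin] at h1
  omega

lemma tv_conj (hn : 3 ≤ n) (i j : Fin n) (h : i ≠ j) (c : k) (hc : c ≠ 0) :
    ∃ d : Matrix.SpecialLinearGroup (Fin n) k, tv i j h c = d * tv i j h 1 * d⁻¹ := by
  obtain ⟨l, hli, hlj⟩ := exists_third hn i j
  set v : Fin n → k := fun m => if m = i then c else if m = l then c⁻¹ else 1 with hv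
  have hvi : v i = c := by simp [hv]
  have hvl : v l = c⁻¹ := by simp [hv, hli]
  have hvj : v j = 1 := by simp [hv, Ne.symm h, Ne.symm hlj]
  have hdet : (Matrix.diagonal v).det = 1 := by
    rw [Matrix.det_diagonal,
      ← Finset.mul_prod_erase _ _ (Finset.mem_univ i),
      ← Finset.mul_prod_erase _ _ (Finset.mem_erase.2 ⟨hli, Finset.mem_univ l⟩),
      Finset.prod_eq_one, hvi, hvl, mul_one, mul_inv_cancel₀ hc]
    intro m hm
    rw [Finset.mem_erase, Finset.mem_erase] at hm
    simp [hv, hm.1, hm.2.1]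
  set d : Matrix.SpecialLinearGroup (Fin n) k := ⟨Matrix.diagonal v, hdet⟩ with hd
  have key : (Matrix.diagonal v) * Matrix.transvection i j 1 =
      Matrix.transvection i j c * Matrix.diagonal v := by
    ext a b
    rw [Matrix.diagonal_mul, Matrix.mul_diagonal, Matrix.transvection, Matrix.transvection,
      Matrix.add_apply, Matrix.add_apply]
    by_cases hab : a = b
    · subst hab
      have hne : ¬(i = a ∧ j = a) := fun hx => h (hx.1.trans hx.2.symm)
      rw [Matrix.single_apply_of_ne (h := hne), Matrix.single_apply_of_ne (h := hne),
        Matrix.one_apply_eq]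
      ring
    · rw [Matrix.one_apply_ne hab]
      by_cases hij : i = a ∧ j = b
      · obtain ⟨h1, h2⟩ := hij
        subst h1
        subst h2
        rw [Matrix.single_apply_same, Matrix.single_apply_same, hvi, hvj]
        ring
      · rw [Matrix.single_apply_of_ne (h := hij), Matrix.single_apply_of_ne (h := hij)]
        ring
  have keyg : d * tv i j h 1 = tv i j h c * d := Subtype.ext key
  refine ⟨d, ?_⟩
  rw [keyg, mul_assoc, mul_inv_cancel, mul_one]

section QM2

variable (f : Matrix.SpecialLinearGroup (Fin n) k → ℝ) {D : ℝ}
  (hD : ∀ g h : Matrix.SpecialLinearGroup (Fin n) k, |f (g * h) - f g - f h| ≤ D)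

include hD

lemma f_tv_bound (hn : 3 ≤ n) {B0 : ℝ} (hB0nn : 0 ≤ B0)
    (hB0 : ∀ (i j : Fin n) (h : i ≠ j), |f (tv i j h 1)| ≤ B0)
    (i j : Fin n) (h : i ≠ j) (c : k) :
    |f (tv i j h c)| ≤ B0 + |f 1| + 3 * D := by
  have hD0 : 0 ≤ D := hD_nonneg f hD
  by_cases hc : c = 0
  · subst hc
    have h1 : tv i j h (0 : k) = 1 := Subtype.ext (by simp [tv])
    rw [h1]
    have := le_abs_self (f 1)
    linarith
  · obtain ⟨d, hd⟩ := tv_conj hn i j h c hc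
    rw [hd]
    have h1 := f_conj_bound f hD (tv i j h 1) d
    have h2 := hB0 i j h
    linarith

end QM2


end QMSL

/-- For a field `k` and `n ≥ 3`, every quasi-morphism `f : SLₙ(k) → ℝ` is bounded. -/
theorem quasimorphism_SLn_bounded {k : Type*} [Field k] (n : ℕ) (hn : 3 ≤ n)
    (f : Matrix.SpecialLinearGroup (Fin n) k → ℝ)
    (hf : ∃ D : ℝ, ∀ g h : Matrix.SpecialLinearGroup (Fin n) k,
      |f (g * h) - f g - f h| ≤ D) :
    ∃ C : ℝ, ∀ g : Matrix.SpecialLinearGroup (Fin n) k, |f g| ≤ C := by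
  obtain ⟨D, hD⟩ := hf
  have hD0 : 0 ≤ D := QMSL.hD_nonneg f hD
  have hne0 : 0 < n := by omega
  have huniv : (Finset.univ : Finset (Fin n × Fin n)).Nonempty :=
    ⟨(⟨0, hne0⟩, ⟨0, hne0⟩), Finset.mem_univ _⟩
  set T : Fin n × Fin n → Matrix.SpecialLinearGroup (Fin n) k := fun pq =>
    if h : pq.1 ≠ pq.2 then QMSL.tv pq.1 pq.2 h 1 else 1 with hT
  set B0 : ℝ := Finset.sup' Finset.univ huniv fun pq => |f (T pq)| with hB0def
  have hB0 : ∀ (i j : Fin n) (h : i ≠ j), |f (QMSL.tv i j h 1)| ≤ B0 := by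
    intro i j h
    have h1 := Finset.le_sup' (fun pq => |f (T pq)|) (Finset.mem_univ (i, j))
    rw [← hB0def] at h1
    simpa [hT, h] using h1
  have hB0nn : 0 ≤ B0 := by
    have h1 := Finset.le_sup' (fun pq => |f (T pq)|)
      (Finset.mem_univ ((⟨0, hne0⟩ : Fin n), (⟨0, hne0⟩ : Fin n)))
    rw [← hB0def] at h1
    exact le_trans (abs_nonneg _) h1
  set Btv : ℝ := B0 + |f 1| + 3 * D with hBtv
  have hBtvD : 0 ≤ Btv + D := by
    have := abs_nonneg (f 1)
    rw [hBtv]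
    linarith
  refine ⟨|f 1| + ((2 * n + 2) * n : ℕ) * (Btv + D), ?_⟩
  intro g
  obtain ⟨Lg, hmem, hlen, hprod⟩ := QMSL.sl_fact g
  have hbd : ∀ x ∈ Lg, |f x| ≤ Btv := by
    intro x hx
    obtain ⟨i, j, h, c, rfl⟩ := hmem x hx
    exact QMSL.f_tv_bound f hD hn hB0nn hB0 i j h c
  have hmain := QMSL.f_prod_bound f hD Lg hbd
  rw [hprod]
  refine le_trans hmain ?_
  have hlen' : (Lg.length : ℝ) ≤ (((2 * n + 2) * n : ℕ) : ℝ) := Nat.cast_le.2 hlen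
  have := mul_le_mul_of_nonneg_right hlen' hBtvD
  linarith
end
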